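/- arXiv:1407.7289 — 3 statements merged into one kernel-verified Lean document; each statement's English description precedes it below -/
import Mathlib

section
/- Assume the Hardy–Littlewood lower bound: there exists N₀ such that for every even integer N ≥ N₀, the number of ordered pairs (p₁,p₂) of primes with 3 ≤ p₁,p₂ ≤ N and p₁+p₂ = N is at least (1/2)·(N/φ(N))·∏_{p prime, p∤N}(1 - 1/(p-1)²)·N/(log N)². Let d = ∏_{p odd prime}(1 - 1/(p-1)²). Then for every positive integer n and every sufficiently large odd integer q, the number of ordered pairs (p₁,p₂) of primes with 3 ≤ p₁,p₂ ≤ 2nq and p₁+p₂ = 2nq is at least (q/φ(q))·(2nq·d)/(log 2nq)². -/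
lemma card_coprime_range (a b : ℕ) :
    ((Finset.range (a * b)).filter b.Coprime).card = a * b.totient := by
  induction a with
  | zero => simp
  | succ a ih =>
    have hab : (a + 1) * b = a * b + b := by ring
    have hsplit : Finset.range ((a + 1) * b) =
        Finset.range (a * b) ∪ Finset.Ico (a * b) (a * b + b) := by
      rw [hab, Finset.range_eq_Ico, Finset.range_eq_Ico]
      exact (Finset.Ico_union_Ico_eq_Ico (Nat.zero_le _) (Nat.le_add_right _ _)).symm

    rw [hsplit, Finset.filter_union, Finset.card_union_of_disjoint, ih,
      Nat.filter_coprime_Ico_eq_totient]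
    · ring
    · exact Finset.disjoint_filter_filter
        (by rw [Finset.range_eq_Ico]; exact Finset.Ico_disjoint_Ico_consecutive 0 (a*b) (a*b+b))

lemma totient_mul_le' (a b : ℕ) : (a * b).totient ≤ a * b.totient := by
  rw [Nat.totient_eq_card_coprime]
  calc ((Finset.range (a*b)).filter (a*b).Coprime).card
      ≤ ((Finset.range (a*b)).filter b.Coprime).card := by
        apply Finset.card_le_card
        apply Finset.monotone_filter_right
        intro k _ hk
        exact Nat.Coprime.coprime_dvd_left (dvd_mul_left b a) hk
    _ = a * b.totient := card_coprime_range a b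

lemma aux_mult (g : Nat.Primes → ℝ)
    (hg : ∀ p : Nat.Primes, g p = 1 ∨ ((p:ℕ) ≠ 2 ∧ g p = 1 - 1 / ((p : ℝ) - 1) ^ 2)) :
    (∀ p, 0 < g p) ∧ Summable (fun p => Real.log (g p)) ∧
      (∏' p, g p) = Real.exp (∑' p, Real.log (g p)) := by
  have hx3 : ∀ p : Nat.Primes, (p:ℕ) ≠ 2 → (3:ℝ) ≤ (p:ℝ) := by
    intro p hp
    have := p.2.two_le
    exact_mod_cast (by omega : 3 ≤ (p:ℕ))
  have hpos : ∀ p, 3/4 ≤ g p := by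
    intro p
    rcases hg p with h | ⟨hp2, h⟩
    · rw [h]; norm_num
    · have h3 := hx3 p hp2
      have h4 : (4:ℝ) ≤ ((p:ℝ) - 1)^2 := by nlinarith
      have : 1 / ((p:ℝ) - 1)^2 ≤ 1/4 := by
        rw [div_le_div_iff₀ (by positivity) (by norm_num)]
        linarith
      rw [h]; linarith
  have hpos' : ∀ p, 0 < g p := fun p => lt_of_lt_of_le (by norm_num) (hpos p)
  have hle1 : ∀ p, g p ≤ 1 := by
    intro p
    rcases hg p with h | ⟨hp2, h⟩
    · rw [h]
    · have : 0 ≤ 1 / ((p:ℝ) - 1)^2 := by positivity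
      rw [h]; linarith
  have hbound : ∀ p : Nat.Primes, -Real.log (g p) ≤ 6 * ((p:ℝ)⁻¹)^2 := by
    intro p
    have hppos : (0:ℝ) < (p:ℝ) := by exact_mod_cast p.2.pos
    rcases hg p with h | ⟨hp2, h⟩
    · rw [h]; simp only [Real.log_one, neg_zero]; positivity
    · have h3 := hx3 p hp2
      have hgp := hpos p
      have hgp' := hpos' p
      have h1 : -Real.log (g p) = Real.log (g p)⁻¹ := (Real.log_inv _).symm
      have h2 : Real.log (g p)⁻¹ ≤ (g p)⁻¹ - 1 := by
        have := Real.log_le_sub_one_of_pos (inv_pos.mpr hgp')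
        linarith
      have h5 : (g p)⁻¹ - 1 = (1 - g p) / g p := by field_simp
      have h6 : (1 - g p) / g p ≤ (4/3) * (1 - g p) := by
        have h7 : 0 ≤ 1 - g p := by linarith [hle1 p]
        rw [div_le_iff₀ hgp']
        nlinarith
      have h8 : 1 - g p = 1 / ((p:ℝ) - 1)^2 := by rw [h]; ring
      have h9 : 1 / ((p:ℝ) - 1)^2 ≤ (9/4) * ((p:ℝ)⁻¹)^2 := by
        have e : (9/4:ℝ) * ((p:ℝ)⁻¹)^2 = (9/4) / (p:ℝ)^2 := by
          rw [inv_pow]; ring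
        rw [e, div_le_div_iff₀ (by nlinarith) (by positivity)]
        nlinarith
      calc -Real.log (g p) ≤ (1 - g p) / g p := by rw [h1, ← h5]; exact h2
        _ ≤ (4/3) * (1 - g p) := h6
        _ = (4/3) * (1 / ((p:ℝ) - 1)^2) := by rw [h8]
        _ ≤ (4/3) * ((9/4) * ((p:ℝ)⁻¹)^2) := by
            have := h9; nlinarith [sq_nonneg ((p:ℝ)⁻¹)]
        _ ≤ 6 * ((p:ℝ)⁻¹)^2 := by nlinarith [sq_nonneg ((p:ℝ)⁻¹)]
  have hs0 : Summable (fun p : Nat.Primes => ((p:ℝ)) ^ (-2:ℝ)) :=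
    Nat.Primes.summable_rpow.mpr (by norm_num)
  have hs : Summable (fun p : Nat.Primes => 6 * ((p:ℝ)⁻¹)^2) := by
    refine (hs0.mul_left 6).congr fun p => ?_
    have hppos : (0:ℝ) < (p:ℝ) := by exact_mod_cast p.2.pos
    rw [show (-2:ℝ) = -((2:ℕ):ℝ) by norm_num, Real.rpow_neg hppos.le,
      Real.rpow_natCast, inv_pow]
  have hneg : Summable fun p => -Real.log (g p) :=
    Summable.of_nonneg_of_le
      (fun p => neg_nonneg.mpr (Real.log_nonpos (hpos' p).le (hle1 p))) hbound hs
  have hlog : Summable fun p => Real.log (g p) := by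
    have := hneg.neg
    simpa using this
  refine ⟨hpos', hlog, ?_⟩
  have heq := Real.rexp_tsum_eq_tprod hpos' hlog
  rw [← heq]



/-- The number of ordered pairs `(p₁, p₂)` of primes with `3 ≤ p₁, p₂ ≤ N` and `p₁ + p₂ = N`. -/
def goldbachCount (N : ℕ) : ℕ :=
  ((Finset.Icc 3 N ×ˢ Finset.Icc 3 N).filter
    fun p => p.1.Prime ∧ p.2.Prime ∧ p.1 + p.2 = N).card
/-- The singular product `∏_{p prime, p ∤ N} (1 - 1/(p-1)²)`. -/
noncomputable def singularProd (N : ℕ) : ℝ :=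
  ∏' p : Nat.Primes, if (p : ℕ) ∣ N then 1 else 1 - 1 / ((p : ℝ) - 1) ^ 2
/-- The constant `d = ∏_{p odd prime} (1 - 1/(p-1)²)`. -/
noncomputable def dConst : ℝ :=
  ∏' p : Nat.Primes, if (p : ℕ) = 2 then 1 else 1 - 1 / ((p : ℝ) - 1) ^ 2

/-- Assuming the Hardy–Littlewood lower bound, for every positive integer `n` and every
sufficiently large odd integer `q`, the number of ordered pairs of primes `(p₁, p₂)` with
`3 ≤ p₁, p₂ ≤ 2nq` and `p₁ + p₂ = 2nq` is at least `(q/φ(q)) · 2nq·d / (log 2nq)²`. -/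
theorem goldbach_count_lower_bound
    (N₀ : ℕ)
    (hHL : ∀ N : ℕ, N₀ ≤ N → Even N →
      (goldbachCount N : ℝ) ≥
        1 / 2 * ((N : ℝ) / (Nat.totient N : ℝ)) * singularProd N *
          ((N : ℝ) / (Real.log N) ^ 2)) :
    ∃ Q : ℕ, ∀ q : ℕ, Odd q → Q ≤ q → ∀ n : ℕ, 0 < n →
      (goldbachCount (2 * n * q) : ℝ) ≥
        ((q : ℝ) / (Nat.totient q : ℝ)) *
          (2 * (n : ℝ) * (q : ℝ) * dConst) / (Real.log (2 * (n : ℝ) * (q : ℝ))) ^ 2 := by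
  refine ⟨max N₀ 3, fun q hqodd hQ n hn => ?_⟩
  have hq3 : 3 ≤ q := le_trans (le_max_right _ _) hQ
  have hN₀q : N₀ ≤ q := le_trans (le_max_left _ _) hQ
  set N := 2 * n * q with hNdef
  have hqpos : 0 < q := by omega
  have hqN : q ≤ N := Nat.le_mul_of_pos_left q (by omega : 0 < 2 * n)
  have hNge : N₀ ≤ N := le_trans hN₀q hqN
  have hNeven : Even N := ⟨n * q, by rw [hNdef]; ring⟩
  have hHL' := hHL N hNge hNeven
  have hN6 : 6 ≤ N := by
    calc 6 = 2 * 1 * 3 := by norm_num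
      _ ≤ 2 * n * q := Nat.mul_le_mul (Nat.mul_le_mul_left 2 hn) hq3
  have hNR : ((N : ℕ) : ℝ) = 2 * (n : ℝ) * (q : ℝ) := by rw [hNdef]; push_cast; ring
  have hlogpos : 0 < Real.log N :=
    Real.log_pos (by exact_mod_cast (by omega : 1 < N))
  have hφq : 0 < q.totient := Nat.totient_pos.mpr hqpos
  have hφN : 0 < N.totient := Nat.totient_pos.mpr (by omega)
  have htot : N.totient ≤ n * q.totient := by
    have h1 : N = n * (2 * q) := by rw [hNdef]; ring
    calc N.totient = (n * (2 * q)).totient := by rw [← h1]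
      _ ≤ n * (2 * q).totient := totient_mul_le' n (2 * q)
      _ = n * q.totient := by
          rw [Nat.totient_mul (Nat.coprime_two_left.mpr hqodd), Nat.totient_two, one_mul]
  -- singular products
  have h2dvd : 2 ∣ N := ⟨n * q, by rw [hNdef]; ring⟩
  have hA1 := aux_mult (fun p : Nat.Primes => if (p : ℕ) ∣ N then 1 else 1 - 1 / ((p : ℝ) - 1) ^ 2)
    (by
      intro p
      by_cases h : (p : ℕ) ∣ N
      · left; simp [h]
      · right
        refine ⟨fun h2 => h (h2 ▸ h2dvd), by simp [h]⟩)
  have hA2 := aux_mult (fun p : Nat.Primes => if (p : ℕ) = 2 then 1 else 1 - 1 / ((p : ℝ) - 1) ^ 2)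
    (by
      intro p
      by_cases h : (p : ℕ) = 2
      · left; simp [h]
      · right; exact ⟨h, by simp [h]⟩)
  obtain ⟨hpos1, hsum1, heq1⟩ := hA1
  obtain ⟨hpos2, hsum2, heq2⟩ := hA2
  have hsp : 0 < singularProd N := by
    unfold singularProd; rw [heq1]; exact Real.exp_pos _
  have hfac : ∀ p : Nat.Primes,
      (if (p : ℕ) = 2 then (1:ℝ) else 1 - 1 / ((p : ℝ) - 1) ^ 2) ≤
      (if (p : ℕ) ∣ N then (1:ℝ) else 1 - 1 / ((p : ℝ) - 1) ^ 2) := by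
    intro p
    by_cases hdvd : (p : ℕ) ∣ N
    · simp only [hdvd, if_true]
      by_cases h2 : (p : ℕ) = 2
      · simp [h2]
      · simp only [h2, if_false]
        have : 0 ≤ 1 / ((p : ℝ) - 1) ^ 2 := by positivity
        linarith
    · have h2 : (p : ℕ) ≠ 2 := fun h => hdvd (h ▸ h2dvd)
      simp [hdvd, h2]
  have hd_le : dConst ≤ singularProd N := by
    unfold dConst singularProd
    rw [heq1, heq2]
    apply Real.exp_le_exp.mpr
    exact Summable.tsum_le_tsum (fun p => Real.log_le_log (hpos2 p) (hfac p)) hsum2 hsum1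
  -- final computation
  rw [ge_iff_le, ← hNR]
  refine le_trans ?_ hHL'
  have htotR : (N.totient : ℝ) ≤ (n : ℝ) * (q.totient : ℝ) := by exact_mod_cast htot
  have hφqR : (0:ℝ) < (q.totient : ℝ) := by exact_mod_cast hφq
  have hφNR : (0:ℝ) < (N.totient : ℝ) := by exact_mod_cast hφN
  have hkey : (q : ℝ) / (q.totient : ℝ) ≤ 1 / 2 * ((N : ℝ) / (N.totient : ℝ)) := by
    rw [show (1:ℝ) / 2 * ((N : ℝ) / (N.totient : ℝ)) = (N : ℝ) / (2 * (N.totient : ℝ)) by ring,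
      div_le_div_iff₀ hφqR (by positivity)]
    have : (q : ℝ) * (2 * (N.totient : ℝ)) ≤ (q : ℝ) * (2 * ((n : ℝ) * (q.totient : ℝ))) := by
      have hq0 : (0:ℝ) ≤ (q : ℝ) := by positivity
      nlinarith
    refine le_trans this ?_
    rw [hNR]; ring_nf; nlinarith [hφqR, (by exact_mod_cast hqpos : (0:ℝ) < (q:ℝ))]
  have hAq : (0:ℝ) ≤ (q : ℝ) / (q.totient : ℝ) := by positivity
  have hT : (0:ℝ) ≤ (N : ℝ) / (Real.log N) ^ 2 := by positivity
  have hstep : (q : ℝ) / (q.totient : ℝ) * dConst ≤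
      1 / 2 * ((N : ℝ) / (N.totient : ℝ)) * singularProd N :=
    calc (q : ℝ) / (q.totient : ℝ) * dConst
        ≤ (q : ℝ) / (q.totient : ℝ) * singularProd N :=
          mul_le_mul_of_nonneg_left hd_le hAq
      _ ≤ 1 / 2 * ((N : ℝ) / (N.totient : ℝ)) * singularProd N :=
          mul_le_mul_of_nonneg_right hkey hsp.le
  calc (q : ℝ) / (q.totient : ℝ) * ((N : ℝ) * dConst) / (Real.log N) ^ 2
      = ((q : ℝ) / (q.totient : ℝ) * dConst) * ((N : ℝ) / (Real.log N) ^ 2) := by ring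
    _ ≤ (1 / 2 * ((N : ℝ) / (N.totient : ℝ)) * singularProd N) * ((N : ℝ) / (Real.log N) ^ 2) :=
        mul_le_mul_of_nonneg_right hstep hT
    _ = 1 / 2 * ((N : ℝ) / (N.totient : ℝ)) * singularProd N * ((N : ℝ) / (Real.log N) ^ 2) := by
        ring
end

section
/- There is a constant C such that for all β ∈ [1/2, 1] and all x ≥ 3, | ∫₂ˣ u^{β-1}/log u du - x^β/(β·log x) | ≤ C·x^β/(log x)². -/
open Real Set intervalIntegral MeasureTheory

private lemma logsq_le_aux {x : ℝ} (hx : 3 ≤ x) {ε : ℝ} (hε : 0 < ε) :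
    (Real.log x) ^ 2 ≤ (1/ε)^2 * x ^ (2*ε) := by
  have hx0 : (0:ℝ) ≤ x := by linarith
  have h1 : Real.log x ≤ x ^ ε / ε := Real.log_le_rpow_div hx0 hε
  have h0 : 0 ≤ Real.log x := Real.log_nonneg (by linarith)
  have h2 : (Real.log x)^2 ≤ (x ^ ε / ε)^2 := by
    apply pow_le_pow_left₀ h0 h1
  calc (Real.log x)^2 ≤ (x ^ ε / ε)^2 := h2
    _ = (1/ε)^2 * (x ^ ε)^2 := by ring
    _ = (1/ε)^2 * x ^ (2*ε) := by
        rw [← Real.rpow_natCast (x ^ ε) 2, ← Real.rpow_mul hx0]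
        norm_num [mul_comm]

private lemma logsq_le_quarter {x : ℝ} (hx : 3 ≤ x) :
    (Real.log x) ^ 2 ≤ 64 * x ^ (1/4 : ℝ) := by
  have := logsq_le_aux hx (ε := 1/8) (by norm_num)
  norm_num at this
  exact this

private lemma logsq_le_half {x : ℝ} (hx : 3 ≤ x) :
    (Real.log x) ^ 2 ≤ 16 * x ^ (1/2 : ℝ) := by
  have := logsq_le_aux hx (ε := 1/4) (by norm_num)
  norm_num at this
  exact this

private lemma hasDeriv_F {β u : ℝ} (hβ : 1/2 ≤ β) (hu : 2 ≤ u) :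
    HasDerivAt (fun v => v ^ β / (β * Real.log v))
      (u ^ (β - 1) / Real.log u - u ^ (β - 1) / (β * (Real.log u) ^ 2)) u := by
  have hu0 : (0:ℝ) < u := by linarith
  have hβ0 : (0:ℝ) < β := by linarith
  have hlog : 0 < Real.log u := Real.log_pos (by linarith)
  have h1 : HasDerivAt (fun v : ℝ => v ^ β) (β * u ^ (β - 1)) u := by
    simpa [mul_comm] using Real.hasDerivAt_rpow_const (x := u) (p := β) (Or.inl hu0.ne')
  have h2 : HasDerivAt (fun v : ℝ => β * Real.log v) (β * u⁻¹) u :=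
    (Real.hasDerivAt_log hu0.ne').const_mul β
  have hd : HasDerivAt (fun v => v ^ β / (β * Real.log v))
      ((β * u ^ (β - 1) * (β * Real.log u) - u ^ β * (β * u⁻¹)) / (β * Real.log u) ^ 2) u :=
    h1.div h2 (by positivity)
  convert hd using 1
  have hub : u ^ β = u ^ (β - 1) * u := by
    rw [← Real.rpow_add_one hu0.ne']; ring_nf
  rw [hub]
  field_simp

set_option maxHeartbeats 1000000 in
/-- There is a constant `C` such that for all `β ∈ [1/2, 1]` and all `x ≥ 3`,
`| ∫₂ˣ u^{β-1}/log u du - x^β/(β·log x) | ≤ C·x^β/(log x)²`. -/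
theorem integral_rpow_div_log_asymptotic :
    ∃ C : ℝ, ∀ β : ℝ, 1 / 2 ≤ β → β ≤ 1 → ∀ x : ℝ, 3 ≤ x →
      |(∫ u in (2:ℝ)..x, u ^ (β - 1) / Real.log u) - x ^ β / (β * Real.log x)| ≤
        C * x ^ β / (Real.log x) ^ 2 := by
  use 2000
  intro β hβ1 hβ2 x hx
  have hx0 : (0:ℝ) < x := by linarith
  have h2x : (2:ℝ) ≤ x := by linarith
  have hx1 : (1:ℝ) ≤ x := by linarith
  have hβ0 : (0:ℝ) < β := by linarith
  have hlogx : 0 < Real.log x := Real.log_pos (by linarith)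
  have hlog2 : (0.6931471803:ℝ) < Real.log 2 := Real.log_two_gt_d9
  -- continuity facts
  have hcont_r : ∀ a b : ℝ, 2 ≤ a → ContinuousOn (fun u : ℝ => u ^ (β - 1)) (Icc a b) := by
    intro a b ha
    intro u hu
    have hu0 : (0:ℝ) < u := by linarith [hu.1]
    exact (Real.continuousAt_rpow_const u (β-1) (Or.inl hu0.ne')).continuousWithinAt
  have hcont_log : ∀ a b : ℝ, 2 ≤ a → ContinuousOn Real.log (Icc a b) := by
    intro a b ha u hu
    have hu0 : (0:ℝ) < u := by linarith [hu.1]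
    exact (Real.continuousAt_log hu0.ne').continuousWithinAt
  have hcont_f : ∀ a b : ℝ, 2 ≤ a → ContinuousOn (fun u : ℝ => u ^ (β - 1) / Real.log u) (Icc a b) := by
    intro a b ha
    apply ContinuousOn.div (hcont_r a b ha) (hcont_log a b ha)
    intro u hu
    have : 0 < Real.log u := Real.log_pos (by linarith [hu.1])
    exact this.ne'
  have hcont_g : ∀ a b : ℝ, 2 ≤ a →
      ContinuousOn (fun u : ℝ => u ^ (β - 1) / (β * Real.log u ^ 2)) (Icc a b) := by
    intro a b ha
    apply ContinuousOn.div (hcont_r a b ha) (continuousOn_const.mul ((hcont_log a b ha).pow 2))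
    intro u hu
    have hl : 0 < Real.log u := Real.log_pos (by linarith [hu.1])
    exact mul_ne_zero hβ0.ne' (pow_ne_zero 2 hl.ne')
  -- integrabilities on [2,x]
  have hint_f : IntervalIntegrable (fun u : ℝ => u ^ (β - 1) / Real.log u) volume 2 x :=
    (hcont_f 2 x le_rfl).intervalIntegrable_of_Icc h2x
  have hint_g : ∀ a b : ℝ, 2 ≤ a → a ≤ b →
      IntervalIntegrable (fun u : ℝ => u ^ (β - 1) / (β * Real.log u ^ 2)) volume a b :=
    fun a b ha hab => (hcont_g a b ha).intervalIntegrable_of_Icc hab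
  have hint_r : ∀ a b : ℝ, 2 ≤ a → a ≤ b →
      IntervalIntegrable (fun u : ℝ => u ^ (β - 1)) volume a b :=
    fun a b ha hab => (hcont_r a b ha).intervalIntegrable_of_Icc hab
  -- FTC
  have hFTC : (∫ u in (2:ℝ)..x,
      (u ^ (β - 1) / Real.log u - u ^ (β - 1) / (β * Real.log u ^ 2)))
      = x ^ β / (β * Real.log x) - 2 ^ β / (β * Real.log 2) := by
    apply intervalIntegral.integral_eq_sub_of_hasDerivAt
    · intro u hu
      rw [Set.uIcc_of_le h2x] at hu
      exact hasDeriv_F hβ1 hu.1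
    · exact hint_f.sub (hint_g 2 x le_rfl h2x)
  have hsplit : (∫ u in (2:ℝ)..x, u ^ (β - 1) / Real.log u)
      - x ^ β / (β * Real.log x)
      = (∫ u in (2:ℝ)..x, u ^ (β - 1) / (β * Real.log u ^ 2)) - 2 ^ β / (β * Real.log 2) := by
    have := intervalIntegral.integral_sub hint_f (hint_g 2 x le_rfl h2x)
    rw [this] at hFTC
    linarith [hFTC]
  rw [hsplit]
  -- bound the two nonnegative terms
  set I := ∫ u in (2:ℝ)..x, u ^ (β - 1) / (β * Real.log u ^ 2) with hI
  have hIpos : 0 ≤ I := by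
    apply intervalIntegral.integral_nonneg h2x
    intro u hu
    have hl : 0 < Real.log u := Real.log_pos (by linarith [hu.1])
    have : (0:ℝ) < u := by linarith [hu.1]
    positivity
  have hF2pos : 0 ≤ 2 ^ β / (β * Real.log 2) := by positivity
  -- key quantity
  have hxb0 : 0 < x ^ β := Real.rpow_pos_of_pos hx0 β
  -- bound on F2 : ≤ 96 * x^β / (log x)^2
  have hF2 : 2 ^ β / (β * Real.log 2) ≤ 96 * x ^ β / (Real.log x) ^ 2 := by
    have h2b : (2:ℝ) ^ β ≤ 2 := by
      calc (2:ℝ) ^ β ≤ 2 ^ (1:ℝ) := Real.rpow_le_rpow_of_exponent_le (by norm_num) hβ2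
        _ = 2 := by norm_num
    have hden : (1:ℝ)/3 ≤ β * Real.log 2 := by nlinarith
    have h1 : 2 ^ β / (β * Real.log 2) ≤ 6 := by
      rw [div_le_iff₀ (by nlinarith)]
      nlinarith
    have h2 : (Real.log x)^2 ≤ 16 * x ^ (1/2:ℝ) := logsq_le_half hx
    have h3 : x ^ (1/2:ℝ) ≤ x ^ β := Real.rpow_le_rpow_of_exponent_le hx1 hβ1
    have h4 : (Real.log x)^2 ≤ 16 * x ^ β := by linarith
    calc 2 ^ β / (β * Real.log 2) ≤ 6 := h1
      _ ≤ 96 * x ^ β / (Real.log x) ^ 2 := by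
          rw [le_div_iff₀ (by positivity)]
          nlinarith
  -- bound on I
  set t := max (x ^ (1/2:ℝ)) 2 with ht
  have hxhalf1 : (1:ℝ) ≤ x ^ (1/2:ℝ) := Real.one_le_rpow hx1 (by norm_num)
  have h2t : (2:ℝ) ≤ t := le_max_right _ _
  have htx : t ≤ x := by
    apply max_le _ h2x
    calc x ^ (1/2:ℝ) ≤ x ^ (1:ℝ) := Real.rpow_le_rpow_of_exponent_le hx1 (by norm_num)
      _ = x := Real.rpow_one x
  have ht0 : 0 < t := by linarith
  -- integral of rpow
  have hrint : ∀ a b : ℝ, 0 < a → (∫ u in a..b, u ^ (β - 1)) = (b ^ β - a ^ β) / β := by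
    intro a b ha
    rw [integral_rpow (Or.inl (by linarith : (-1:ℝ) < β - 1))]
    norm_num
  -- part 1 : [2, t]
  have hpart1 : (∫ u in (2:ℝ)..t, u ^ (β - 1) / (β * Real.log u ^ 2))
      ≤ 9 * t ^ β := by
    have hmono : (∫ u in (2:ℝ)..t, u ^ (β - 1) / (β * Real.log u ^ 2))
        ≤ ∫ u in (2:ℝ)..t, (2 / (Real.log 2)^2) * u ^ (β - 1) := by
      apply intervalIntegral.integral_mono_on h2t (hint_g 2 t le_rfl h2t)
        (((hint_r 2 t le_rfl h2t)).const_mul _)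
      intro u hu
      have hu2 : (2:ℝ) ≤ u := hu.1
      have hu0 : (0:ℝ) < u := by linarith
      have hl2 : Real.log 2 ≤ Real.log u := Real.log_le_log (by norm_num) hu2
      have hl2p : (0:ℝ) < Real.log 2 := by linarith
      have hlu : 0 < Real.log u := lt_of_lt_of_le hl2p hl2
      rw [div_le_iff₀ (by positivity)]
      have hr0 : 0 ≤ u ^ (β - 1) := (Real.rpow_pos_of_pos hu0 _).le
      have hsq : (Real.log 2)^2 ≤ (Real.log u)^2 := by nlinarith
      have : (1:ℝ) ≤ (2 / (Real.log 2)^2) * (β * Real.log u ^ 2) := by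
        rw [div_mul_eq_mul_div, le_div_iff₀ (by positivity)]
        nlinarith
      nlinarith
    rw [intervalIntegral.integral_const_mul, hrint 2 t (by norm_num)] at hmono
    have htb0 : 0 < t ^ β := Real.rpow_pos_of_pos ht0 β
    have h2b0 : 0 < (2:ℝ) ^ β := Real.rpow_pos_of_pos (by norm_num) β
    have hdiv : (t ^ β - 2 ^ β) / β ≤ 2 * t ^ β := by
      rw [div_le_iff₀ hβ0]; nlinarith
    have hl2p : (0:ℝ) < Real.log 2 := by linarith
    have hc : 2 / (Real.log 2)^2 ≤ 4.5 := by
      rw [div_le_iff₀ (by positivity)]; nlinarith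
    calc (∫ u in (2:ℝ)..t, u ^ (β - 1) / (β * Real.log u ^ 2))
        ≤ 2 / (Real.log 2)^2 * ((t ^ β - 2 ^ β) / β) := hmono
      _ ≤ 4.5 * (2 * t ^ β) := by
          have h2tb : (2:ℝ)^β ≤ t^β := Real.rpow_le_rpow (by norm_num) h2t hβ0.le
          apply mul_le_mul hc hdiv (div_nonneg (by linarith) hβ0.le) (by norm_num)
      _ = 9 * t ^ β := by ring
  -- t^β ≤ 3 * x^(β/2)  and  x^(β/2) ≤ 64 * x^β / (log x)^2
  have htb : t ^ β ≤ 3 * x ^ (β/2) := by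
    have h1 : t ≤ 3 * x ^ (1/2:ℝ) := by
      apply max_le
      · nlinarith
      · nlinarith
    calc t ^ β ≤ (3 * x ^ (1/2:ℝ)) ^ β := Real.rpow_le_rpow ht0.le h1 hβ0.le
      _ = 3 ^ β * (x ^ (1/2:ℝ)) ^ β := Real.mul_rpow (by norm_num) (Real.rpow_nonneg hx0.le _)
      _ = 3 ^ β * x ^ (β/2) := by
          rw [← Real.rpow_mul hx0.le]
          congr 1
          ring
      _ ≤ 3 * x ^ (β/2) := by
          have : (3:ℝ) ^ β ≤ 3 ^ (1:ℝ) := Real.rpow_le_rpow_of_exponent_le (by norm_num) hβ2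
          have hxp : 0 < x ^ (β/2) := Real.rpow_pos_of_pos hx0 _
          nlinarith [this, Real.rpow_one (3:ℝ)]
  have hxhalfb : x ^ (β/2) ≤ 64 * x ^ β / (Real.log x)^2 := by
    have h1 : x ^ (β/2) ≤ x ^ (β - 1/4) :=
      Real.rpow_le_rpow_of_exponent_le hx1 (by linarith)
    have h2 : x ^ (β - 1/4 : ℝ) = x ^ β / x ^ (1/4:ℝ) := Real.rpow_sub hx0 _ _
    have h3 : (Real.log x)^2 ≤ 64 * x ^ (1/4:ℝ) := logsq_le_quarter hx
    have hq0 : 0 < x ^ (1/4:ℝ) := Real.rpow_pos_of_pos hx0 _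
    have h4 : x ^ β / x ^ (1/4:ℝ) ≤ 64 * x ^ β / (Real.log x)^2 := by
      rw [div_le_div_iff₀ hq0 (by positivity)]
      nlinarith
    linarith [h1, h2 ▸ h1]
  -- part 2 : [t, x]
  have hpart2 : (∫ u in t..x, u ^ (β - 1) / (β * Real.log u ^ 2))
      ≤ 16 * x ^ β / (Real.log x)^2 := by
    have hlogt : Real.log x / 2 ≤ Real.log t := by
      have : Real.log (x ^ (1/2:ℝ)) ≤ Real.log t :=
        Real.log_le_log (by positivity) (le_max_left _ _)
      rw [Real.log_rpow hx0] at this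
      linarith
    have hmono : (∫ u in t..x, u ^ (β - 1) / (β * Real.log u ^ 2))
        ≤ ∫ u in t..x, (8 / (Real.log x)^2) * u ^ (β - 1) := by
      apply intervalIntegral.integral_mono_on htx (hint_g t x h2t htx)
        ((hint_r t x h2t htx).const_mul _)
      intro u hu
      have hut : t ≤ u := hu.1
      have hu0 : (0:ℝ) < u := by linarith
      have hlu : Real.log x / 2 ≤ Real.log u :=
        le_trans hlogt (Real.log_le_log ht0 hut)
      have hlup : 0 < Real.log u := by linarith
      rw [div_le_iff₀ (by positivity)]
      have hr0 : 0 ≤ u ^ (β - 1) := (Real.rpow_pos_of_pos hu0 _).le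
      have hsq : (Real.log x)^2 / 4 ≤ (Real.log u)^2 := by nlinarith
      have : (1:ℝ) ≤ (8 / (Real.log x)^2) * (β * Real.log u ^ 2) := by
        rw [div_mul_eq_mul_div, le_div_iff₀ (by positivity)]
        nlinarith
      nlinarith
    rw [intervalIntegral.integral_const_mul, hrint t x ht0] at hmono
    have htb0 : 0 < t ^ β := Real.rpow_pos_of_pos ht0 β
    have hdiv : (x ^ β - t ^ β) / β ≤ 2 * x ^ β := by
      rw [div_le_iff₀ hβ0]; nlinarith
    calc (∫ u in t..x, u ^ (β - 1) / (β * Real.log u ^ 2))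
        ≤ 8 / (Real.log x)^2 * ((x ^ β - t ^ β) / β) := hmono
      _ ≤ 8 / (Real.log x)^2 * (2 * x ^ β) := by
          apply mul_le_mul_of_nonneg_left hdiv (by positivity)
      _ = 16 * x ^ β / (Real.log x)^2 := by ring
  -- combine split
  have hIsplit : I = (∫ u in (2:ℝ)..t, u ^ (β - 1) / (β * Real.log u ^ 2))
      + ∫ u in t..x, u ^ (β - 1) / (β * Real.log u ^ 2) := by
    rw [hI, ← intervalIntegral.integral_add_adjacent_intervals
      (hint_g 2 t le_rfl h2t) (hint_g t x h2t htx)]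
  have hIbound : I ≤ 1744 * x ^ β / (Real.log x)^2 := by
    rw [hIsplit]
    have h1 : (∫ u in (2:ℝ)..t, u ^ (β - 1) / (β * Real.log u ^ 2))
        ≤ 1728 * x ^ β / (Real.log x)^2 := by
      calc (∫ u in (2:ℝ)..t, u ^ (β - 1) / (β * Real.log u ^ 2)) ≤ 9 * t ^ β := hpart1
        _ ≤ 9 * (3 * x ^ (β/2)) := by nlinarith
        _ = 27 * x ^ (β/2) := by ring
        _ ≤ 27 * (64 * x ^ β / (Real.log x)^2) := by nlinarith
        _ = 1728 * x ^ β / (Real.log x)^2 := by ring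
    rw [mul_div_assoc] at h1 hpart2 ⊢
    linarith
  -- final
  have habs : |I - 2 ^ β / (β * Real.log 2)| ≤ I + 2 ^ β / (β * Real.log 2) := by
    rw [abs_sub_le_iff]; constructor <;> linarith
  calc |I - 2 ^ β / (β * Real.log 2)| ≤ I + 2 ^ β / (β * Real.log 2) := habs
    _ ≤ 1744 * x ^ β / (Real.log x)^2 + 96 * x ^ β / (Real.log x)^2 := by linarith
    _ = 1840 * x ^ β / (Real.log x)^2 := by ring
    _ ≤ 2000 * x ^ β / (Real.log x)^2 := by
        exact (div_le_div_iff_of_pos_right (by positivity : (0:ℝ) < (Real.log x)^2)).mpr (by nlinarith)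
end

section
/- Assume the Hardy–Littlewood lower bound: there exists N₀ such that for every even integer N ≥ N₀, the number of ordered pairs (p₁,p₂) of primes with 3 ≤ p₁,p₂ ≤ N and p₁+p₂ = N is at least (1/2)·(N/φ(N))·∏_{p prime, p∤N}(1 - 1/(p-1)²)·N/(log N)². Let d = ∏_{p odd prime}(1 - 1/(p-1)²). Then there exists a constant C > 0 such that for every sufficiently large odd integer q and every real x ≥ q⁴, ∑_{k=1}^{q} ( ∑_{p prime, 3 ≤ p ≤ x} e(kp/q) )² ≥ (q·d·x²)/(4·φ(q)·(log x)²) - C·(x·q²)/(φ(q)·(log x)²). -/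
set_option maxHeartbeats 1000000


/-- `e(x) = exp(2πix)`. -/
noncomputable def e (x : ℝ) : ℂ := Complex.exp (2 * (Real.pi : ℂ) * Complex.I * (x : ℂ))
section tprodBlock

/-- A "nice" factor family: each factor is 1 or (for odd primes) `1 - 1/(p-1)²`. -/
def Nice (f : Nat.Primes → ℝ) : Prop :=
  ∀ p : Nat.Primes, f p = 1 ∨ ((p : ℕ) ≠ 2 ∧ f p = 1 - 1 / ((p : ℝ) - 1) ^ 2)

lemma nice_bounds {f : Nat.Primes → ℝ} (hf : Nice f) (p : Nat.Primes) :
    3/4 ≤ f p ∧ f p ≤ 1 := by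
  rcases hf p with h | ⟨h2, h⟩
  · rw [h]; norm_num
  · have hp3 : 3 ≤ (p : ℕ) := by
      have := p.2.two_le
      omega
    have hp3' : (3 : ℝ) ≤ (p : ℕ) := by exact_mod_cast hp3
    have h4 : (4 : ℝ) ≤ ((p : ℝ) - 1) ^ 2 := by nlinarith
    have hpos : (0:ℝ) < ((p : ℝ) - 1) ^ 2 := by linarith
    constructor
    · rw [h]
      have : 1 / ((p : ℝ) - 1) ^ 2 ≤ 1/4 := by
        rw [div_le_div_iff₀ hpos (by norm_num)]; linarith
      linarith
    · rw [h]
      have : 0 ≤ 1 / ((p : ℝ) - 1) ^ 2 := by positivity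
      linarith

lemma nice_pos {f : Nat.Primes → ℝ} (hf : Nice f) (p : Nat.Primes) : 0 < f p :=
  lt_of_lt_of_le (by norm_num) (nice_bounds hf p).1

lemma nice_summable_log {f : Nat.Primes → ℝ} (hf : Nice f) :
    Summable fun p => Real.log (f p) := by
  rw [← summable_neg_iff]
  have hsum : Summable fun p : Nat.Primes => 4 / (p : ℝ) ^ 2 := by
    have : Summable fun n : ℕ => 4 / (n : ℝ) ^ 2 := by
      have := (Real.summable_one_div_nat_pow (p := 2)).2 (by norm_num)
      simpa [div_eq_mul_inv, mul_comm] using this.mul_left 4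
    exact this.subtype _
  refine Summable.of_nonneg_of_le ?_ ?_ hsum
  · intro p
    simp only [neg_nonneg]
    exact Real.log_nonpos (le_of_lt (nice_pos hf p)) (nice_bounds hf p).2
  · intro p
    have hpos := nice_pos hf p
    have hb := nice_bounds hf p
    have h1 : -Real.log (f p) = Real.log (1 / f p) := by
      rw [Real.log_div one_ne_zero (ne_of_gt hpos), Real.log_one]; ring
    rw [h1]
    have h2 : Real.log (1 / f p) ≤ 1 / f p - 1 :=
      Real.log_le_sub_one_of_pos (by positivity)
    have h3 : 1 / f p - 1 = (1 - f p) / f p := by field_simp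
    have hp2 : (2:ℝ) ≤ (p:ℕ) := by exact_mod_cast p.2.two_le
    have hpsq : (0:ℝ) < (p : ℝ) ^ 2 := by positivity
    have h4 : (1 - f p) / f p ≤ 4 / (p : ℝ) ^ 2 := by
      rcases hf p with h | ⟨_, h⟩
      · rw [h]; simp; positivity
      · have hp3 : 3 ≤ (p : ℕ) := by have := p.2.two_le; omega
        have hp3' : (3 : ℝ) ≤ (p : ℕ) := by exact_mod_cast hp3
        have h5 : 1 - f p = 1 / ((p : ℝ) - 1) ^ 2 := by rw [h]; ring
        rw [h5, div_div]
        rw [div_le_div_iff₀ (by nlinarith) (by positivity)]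
        have : ((p:ℝ) - 1) ^ 2 ≥ ((p:ℝ)/2) ^ 2 := by nlinarith
        nlinarith [hb.1, hb.2]
    linarith

lemma nice_multipliable {f : Nat.Primes → ℝ} (hf : Nice f) : Multipliable f := by
  have := Real.multipliable_of_summable_log (fun p => nice_pos hf p) (nice_summable_log hf)
  exact this

lemma nice_tprod_pos {f : Nat.Primes → ℝ} (hf : Nice f) : 0 < ∏' p, f p := by
  have := Real.rexp_tsum_eq_tprod (fun p => nice_pos hf p) (nice_summable_log hf)
  rw [← this]
  exact Real.exp_pos _

lemma nice_dConst : Nice (fun p : Nat.Primes => if (p : ℕ) = 2 then 1 else 1 - 1 / ((p : ℝ) - 1) ^ 2) := by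
  intro p
  by_cases h : (p : ℕ) = 2
  · left; simp [h]
  · right; exact ⟨h, by simp [h]⟩

lemma dConst_pos : 0 < dConst := nice_tprod_pos nice_dConst

lemma nice_singular {N : ℕ} (hN : Even N) :
    Nice (fun p : Nat.Primes => if (p : ℕ) ∣ N then 1 else 1 - 1 / ((p : ℝ) - 1) ^ 2) := by
  intro p
  by_cases h : (p : ℕ) ∣ N
  · left; simp [h]
  · right
    refine ⟨?_, by simp [h]⟩
    intro hp2
    rw [hp2] at h
    exact h hN.two_dvd

lemma nice_le {N : ℕ} (hN : Even N) (p : Nat.Primes) :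
    (if (p : ℕ) = 2 then (1:ℝ) else 1 - 1 / ((p : ℝ) - 1) ^ 2) ≤
      (if (p : ℕ) ∣ N then 1 else 1 - 1 / ((p : ℝ) - 1) ^ 2) := by
  by_cases h2 : (p : ℕ) = 2
  · have hdvd : (p : ℕ) ∣ N := h2 ▸ hN.two_dvd
    rw [if_pos h2, if_pos hdvd]
  · by_cases hd : (p : ℕ) ∣ N
    · simp only [h2, hd, if_true, if_false]
      have := (nice_bounds nice_dConst p).2
      simpa [h2] using this
    · simp [h2, hd]

lemma nice_tprod_eq {f : Nat.Primes → ℝ} (hf : Nice f) :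
    ∏' p, f p = Real.exp (∑' p, Real.log (f p)) := by
  have := Real.rexp_tsum_eq_tprod (fun p => nice_pos hf p) (nice_summable_log hf)
  exact this.symm

lemma dConst_le_singularProd {N : ℕ} (hN : Even N) : dConst ≤ singularProd N := by
  unfold dConst singularProd
  rw [nice_tprod_eq nice_dConst, nice_tprod_eq (nice_singular hN)]
  apply Real.exp_le_exp.2
  refine Summable.tsum_le_tsum ?_ (nice_summable_log nice_dConst) (nice_summable_log (nice_singular hN))
  intro p
  exact Real.log_le_log (nice_pos nice_dConst p) (nice_le hN p)

end tprodBlock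

lemma phi_mul_le (a : ℕ) : ∀ m, Nat.totient (a * m) ≤ Nat.totient a * m := by
  intro m
  induction m using Nat.strong_induction_on with
  | _ m ih =>
    rcases Nat.eq_zero_or_pos m with rfl | hm
    · simp
    by_cases h : a.Coprime m
    · rw [Nat.totient_mul h]
      exact Nat.mul_le_mul_left _ (Nat.totient_le m)
    · have hg : Nat.gcd a m ≠ 1 := h
      obtain ⟨p, hpp, hpa, hpm⟩ : ∃ p, p.Prime ∧ p ∣ a ∧ p ∣ m :=
        ⟨(Nat.gcd a m).minFac, Nat.minFac_prime hg,
          (Nat.minFac_dvd _).trans (Nat.gcd_dvd_left a m),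
          (Nat.minFac_dvd _).trans (Nat.gcd_dvd_right a m)⟩
      obtain ⟨m', rfl⟩ := hpm
      have hm'0 : 0 < m' := by
        rcases Nat.eq_zero_or_pos m' with rfl | h'
        · simp at hm
        · exact h'
      have hm' : m' < p * m' := by
        have h1 : 1 < p := hpp.one_lt
        calc m' = 1 * m' := (one_mul m').symm
        _ < p * m' := by exact Nat.mul_lt_mul_of_lt_of_le h1 (le_refl m') hm'0
      have key : a * (p * m') = p * (a * m') := by ring
      rw [key, Nat.totient_mul_of_prime_of_dvd hpp (hpa.trans (Nat.dvd_mul_right a m'))]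
      calc p * (a * m').totient ≤ p * (a.totient * m') := Nat.mul_le_mul_left p (ih m' hm')
      _ = a.totient * (p * m') := by ring

lemma e_nat_pow (k m q : ℕ) :
    e ((k : ℝ) * (m : ℝ) / (q : ℝ)) = (e ((m : ℝ) / (q : ℝ))) ^ k := by
  rw [e, e, ← Complex.exp_nat_mul]
  congr 1
  push_cast
  ring

lemma sum_e_eq (q m : ℕ) (hq : 0 < q) :
    ∑ k ∈ Finset.Icc 1 q, e ((k : ℝ) * (m : ℝ) / (q : ℝ)) =
      if q ∣ m then (q : ℂ) else 0 := by
  have hq0 : (q : ℝ) ≠ 0 := Nat.cast_ne_zero.2 hq.ne'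
  have hqc0 : (q : ℂ) ≠ 0 := Nat.cast_ne_zero.2 hq.ne'
  by_cases hd : q ∣ m
  · rw [if_pos hd]
    obtain ⟨t, rfl⟩ := hd
    have hone : ∀ k ∈ Finset.Icc 1 q, e ((k : ℝ) * ((q * t : ℕ) : ℝ) / (q : ℝ)) = 1 := by
      intro k _
      rw [e]
      have harg : ((2 : ℂ) * (Real.pi : ℂ) * Complex.I * (((k : ℝ) * ((q * t : ℕ) : ℝ) / (q : ℝ) : ℝ) : ℂ))
          = ((k * t : ℤ) : ℂ) * (2 * (Real.pi : ℂ) * Complex.I) := by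
        push_cast
        field_simp
      rw [harg, Complex.exp_int_mul_two_pi_mul_I]
    rw [Finset.sum_congr rfl hone]
    simp [Nat.card_Icc]
  · rw [if_neg hd]
    simp only [e_nat_pow]
    set ζ : ℂ := e ((m : ℝ) / (q : ℝ)) with hζ
    have hζq : ζ ^ q = 1 := by
      rw [hζ, e, ← Complex.exp_nat_mul]
      have harg : (q : ℂ) * (2 * (Real.pi : ℂ) * Complex.I * (((m : ℝ) / (q : ℝ) : ℝ) : ℂ))
          = ((m : ℤ) : ℂ) * (2 * (Real.pi : ℂ) * Complex.I) := by
        push_cast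
        field_simp
      rw [harg, Complex.exp_int_mul_two_pi_mul_I]
    have hζ1 : ζ ≠ 1 := by
      intro h
      rw [hζ, e] at h
      obtain ⟨n, hn⟩ := Complex.exp_eq_one_iff.1 h
      have h2πI : (2 * (Real.pi : ℂ) * Complex.I) ≠ 0 := by
        simp [Real.pi_ne_zero, Complex.I_ne_zero]
      have hx : (((m : ℝ) / (q : ℝ) : ℝ) : ℂ) = ((n : ℂ)) := by
        have : (2 * (Real.pi : ℂ) * Complex.I) * (((m : ℝ) / (q : ℝ) : ℝ) : ℂ)
            = (2 * (Real.pi : ℂ) * Complex.I) * (n : ℂ) := by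
          rw [hn]; ring
        exact mul_left_cancel₀ h2πI this
      have hx2 : ((m : ℝ) / (q : ℝ)) = (n : ℝ) := by
        have : (((m : ℝ) / (q : ℝ) : ℝ) : ℂ) = (((n : ℝ)) : ℂ) := by
          rw [hx]; push_cast; ring
        exact_mod_cast this
      have hm : (m : ℝ) = (n : ℝ) * (q : ℝ) := by
        field_simp at hx2
        linarith [hx2]
      have hmz : (m : ℤ) = n * q := by exact_mod_cast hm
      exact hd (Int.natCast_dvd_natCast.1 ⟨n, by rw [hmz]; ring⟩)
    have hgeom : ∑ k ∈ Finset.range q, ζ ^ k = 0 := by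
      rw [geom_sum_eq hζ1, hζq]
      simp
    have hshift : ∀ n : ℕ, ∑ k ∈ Finset.Icc 1 n, ζ ^ k = ζ * ∑ k ∈ Finset.range n, ζ ^ k := by
      intro n
      induction n with
      | zero => simp
      | succ n ihn =>
        rw [Finset.sum_Icc_succ_top (by omega), ihn, Finset.sum_range_succ]
        ring
    rw [hshift q, hgeom, mul_zero]

lemma lhs_eq (q : ℕ) (hq : 0 < q) (M : ℕ) :
    (∑ k ∈ Finset.Icc 1 q,
        (∑ p ∈ (Finset.Icc 3 M).filter Nat.Prime, e ((k : ℝ) * (p : ℝ) / (q : ℝ))) ^ 2) =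
      ((((((Finset.Icc 3 M).filter Nat.Prime) ×ˢ ((Finset.Icc 3 M).filter Nat.Prime)).filter
          fun pp => q ∣ pp.1 + pp.2).card : ℕ) : ℂ) * (q : ℂ) := by
  have hqc0 : (q : ℂ) ≠ 0 := Nat.cast_ne_zero.2 hq.ne'
  set P := (Finset.Icc 3 M).filter Nat.Prime with hP
  have hprod : ∀ (k p₁ p₂ : ℕ),
      e ((k : ℝ) * (p₁ : ℝ) / (q : ℝ)) * e ((k : ℝ) * (p₂ : ℝ) / (q : ℝ)) =
        e ((k : ℝ) * ((p₁ + p₂ : ℕ) : ℝ) / (q : ℝ)) := by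
    intro k p₁ p₂
    rw [e, e, e, ← Complex.exp_add]
    congr 1
    push_cast
    field_simp
  calc (∑ k ∈ Finset.Icc 1 q, (∑ p ∈ P, e ((k : ℝ) * (p : ℝ) / (q : ℝ))) ^ 2)
      = ∑ k ∈ Finset.Icc 1 q, ∑ pp ∈ P ×ˢ P,
          e ((k : ℝ) * ((pp.1 + pp.2 : ℕ) : ℝ) / (q : ℝ)) := by
        refine Finset.sum_congr rfl fun k _ => ?_
        rw [sq, Finset.sum_mul_sum, ← Finset.sum_product']
        exact Finset.sum_congr rfl fun pp _ => hprod k pp.1 pp.2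
    _ = ∑ pp ∈ P ×ˢ P, ∑ k ∈ Finset.Icc 1 q,
          e ((k : ℝ) * ((pp.1 + pp.2 : ℕ) : ℝ) / (q : ℝ)) := Finset.sum_comm
    _ = ∑ pp ∈ P ×ˢ P, (if q ∣ pp.1 + pp.2 then (q : ℂ) else 0) :=
        Finset.sum_congr rfl fun pp _ => sum_e_eq q (pp.1 + pp.2) hq
    _ = (((P ×ˢ P).filter fun pp => q ∣ pp.1 + pp.2).card : ℂ) * (q : ℂ) := by
        rw [Finset.sum_ite, Finset.sum_const, Finset.sum_const_zero, add_zero, nsmul_eq_mul]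

lemma count_le (q M : ℕ) (hq : 0 < q) :
    ∑ j ∈ Finset.Icc 1 (M / (2 * q)), goldbachCount (2 * q * j) ≤
      ((((Finset.Icc 3 M).filter Nat.Prime) ×ˢ ((Finset.Icc 3 M).filter Nat.Prime)).filter
          fun pp => q ∣ pp.1 + pp.2).card := by
  set P := (Finset.Icc 3 M).filter Nat.Prime with hP
  set T := (P ×ˢ P).filter fun pp => q ∣ pp.1 + pp.2 with hT
  set G : ℕ → Finset (ℕ × ℕ) := fun N =>
    (Finset.Icc 3 N ×ˢ Finset.Icc 3 N).filter
      fun p => p.1.Prime ∧ p.2.Prime ∧ p.1 + p.2 = N with hG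
  have hdisj : ∀ j1 ∈ Finset.Icc 1 (M / (2 * q)), ∀ j2 ∈ Finset.Icc 1 (M / (2 * q)),
      j1 ≠ j2 → Disjoint (G (2 * q * j1)) (G (2 * q * j2)) := by
    intro j1 _ j2 _ hne
    rw [Finset.disjoint_left]
    intro pp h1 h2
    simp only [hG, Finset.mem_filter] at h1 h2
    have : 2 * q * j1 = 2 * q * j2 := by omega
    exact hne (Nat.eq_of_mul_eq_mul_left (by omega) this)
  have hcard : ∑ j ∈ Finset.Icc 1 (M / (2 * q)), goldbachCount (2 * q * j) =
      ((Finset.Icc 1 (M / (2 * q))).biUnion fun j => G (2 * q * j)).card := by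
    rw [Finset.card_biUnion hdisj]
    rfl
  rw [hcard]
  apply Finset.card_le_card
  intro pp hpp
  simp only [Finset.mem_biUnion] at hpp
  obtain ⟨j, hj, hmem⟩ := hpp
  simp only [hG, Finset.mem_filter, Finset.mem_product, Finset.mem_Icc] at hmem
  simp only [Finset.mem_Icc] at hj
  have hjle : 2 * q * j ≤ M := by
    have h := (Nat.le_div_iff_mul_le (by omega : 0 < 2 * q)).1 hj.2
    calc 2 * q * j = j * (2 * q) := by ring
    _ ≤ M := h
  simp only [hT, hP, Finset.mem_filter, Finset.mem_product, Finset.mem_Icc]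
  refine ⟨⟨⟨⟨hmem.1.1.1, by omega⟩, hmem.2.1⟩, ⟨⟨hmem.1.2.1, by omega⟩, hmem.2.2.1⟩⟩, ?_⟩
  rw [hmem.2.2.2]
  exact ⟨2 * j, by ring⟩

lemma gauss (J : ℕ) : ∑ j ∈ Finset.Icc 1 J, (j : ℝ) = J * (J + 1) / 2 := by
  induction J with
  | zero => simp
  | succ n ih =>
    rw [Finset.sum_Icc_succ_top (by omega), ih]
    push_cast
    ring

/-- Assuming the Hardy–Littlewood lower bound, there is a constant `C > 0` such that for every
sufficiently large odd `q` and every real `x ≥ q⁴`,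
`∑_{k=1}^{q} ( ∑_{p prime, 3 ≤ p ≤ x} e(kp/q) )² ≥ q·d·x²/(4·φ(q)·(log x)²) - C·x·q²/(φ(q)·(log x)²)`. -/
theorem sum_sq_prime_exponential_lower_bound
    (N₀ : ℕ)
    (hHL : ∀ N : ℕ, N₀ ≤ N → Even N →
      (goldbachCount N : ℝ) ≥
        1 / 2 * ((N : ℝ) / (Nat.totient N : ℝ)) * singularProd N *
          ((N : ℝ) / (Real.log N) ^ 2)) :
    ∃ C : ℝ, 0 < C ∧ ∃ Q : ℕ, ∀ q : ℕ, Odd q → Q ≤ q → ∀ x : ℝ, (q : ℝ) ^ 4 ≤ x →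
      (∑ k ∈ Finset.Icc 1 q,
          (∑ p ∈ (Finset.Icc 3 ⌊x⌋₊).filter Nat.Prime,
            e ((k : ℝ) * (p : ℝ) / (q : ℝ))) ^ 2).re ≥
        (q : ℝ) * dConst * x ^ 2 / (4 * (Nat.totient q : ℝ) * (Real.log x) ^ 2) -
          C * (x * (q : ℝ) ^ 2) / ((Nat.totient q : ℝ) * (Real.log x) ^ 2) := by
  refine ⟨2 * dConst + 1, by linarith [dConst_pos], N₀ + 3, ?_⟩
  intro q hodd hQq x hx
  set d := dConst with hd
  have hd0 : 0 < d := dConst_pos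
  have hq3 : 3 ≤ q := by omega
  have hq0 : 0 < q := by omega
  have hqR : (3 : ℝ) ≤ (q : ℝ) := by exact_mod_cast hq3
  have hx81 : (81 : ℝ) ≤ x := by
    have h34 : (3 : ℝ) ^ 4 ≤ (q : ℝ) ^ 4 := pow_le_pow_left₀ (by norm_num) hqR 4
    norm_num at h34
    linarith
  have hx1 : (1 : ℝ) < x := by linarith
  have hx0 : (0 : ℝ) ≤ x := by linarith
  have hlogx : 0 < Real.log x := Real.log_pos hx1
  set L := (Real.log x) ^ 2 with hL
  have hL0 : 0 < L := by positivity
  have hφq : 0 < (Nat.totient q : ℝ) := by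
    exact_mod_cast Nat.totient_pos.2 hq0
  set M := ⌊x⌋₊ with hM
  set J := M / (2 * q) with hJ
  have hMx : (M : ℝ) ≤ x := Nat.floor_le hx0
  have hxM : x < (M : ℝ) + 1 := Nat.lt_floor_add_one x
  -- step 1 : LHS = Tcard * q
  set T := ((((Finset.Icc 3 M).filter Nat.Prime) ×ˢ ((Finset.Icc 3 M).filter Nat.Prime)).filter
      fun pp => q ∣ pp.1 + pp.2) with hT
  rw [lhs_eq q hq0 M]
  have hre : (((T.card : ℕ) : ℂ) * (q : ℂ)).re = (T.card : ℝ) * (q : ℝ) := by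
    norm_num [Complex.mul_re]
  rw [hre]
  -- step 2 : per-term lower bound
  have hterm : ∀ j ∈ Finset.Icc 1 J,
      (2 * d * (q : ℝ) ^ 2 / ((Nat.totient q : ℝ) * L)) * (j : ℝ) ≤
        (goldbachCount (2 * q * j) : ℝ) := by
    intro j hj
    simp only [Finset.mem_Icc] at hj
    set N := 2 * q * j with hN
    have hj1 : 1 ≤ j := hj.1
    have hNM : N ≤ M := by
      have h := (Nat.le_div_iff_mul_le (by omega : 0 < 2 * q)).1 hj.2
      calc N = j * (2 * q) := by rw [hN]; ring
      _ ≤ M := h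
    have hmul : 2 * q * 1 ≤ 2 * q * j := Nat.mul_le_mul_left _ hj1
    have hN6 : 6 ≤ N := by omega
    have hN₀ : N₀ ≤ N := by omega
    have hNeven : Even N := ⟨q * j, by rw [hN]; ring⟩
    have hHLN := hHL N hN₀ hNeven
    have hNR : (0 : ℝ) < (N : ℝ) := by exact_mod_cast Nat.pos_of_ne_zero (by omega)
    have hNx : (N : ℝ) ≤ x := le_trans (by exact_mod_cast hNM) hMx
    have hlogN : 0 < Real.log (N : ℝ) := Real.log_pos (by exact_mod_cast (by omega : 1 < N))
    have hlogNx : Real.log (N : ℝ) ≤ Real.log x := Real.log_le_log hNR hNx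
    have hsq : (Real.log (N : ℝ)) ^ 2 ≤ L := by
      rw [hL]
      exact pow_le_pow_left₀ hlogN.le hlogNx 2
    have hφN : 0 < (Nat.totient N : ℝ) := by
      exact_mod_cast Nat.totient_pos.2 (by omega : 0 < N)
    -- factor 1 : 2q/φq ≤ N/φN
    have hf1 : 2 * (q : ℝ) / (Nat.totient q : ℝ) ≤ (N : ℝ) / (Nat.totient N : ℝ) := by
      rw [div_le_div_iff₀ hφq hφN]
      have hnat : 2 * q * Nat.totient N ≤ N * Nat.totient q := by
        have h1 : Nat.totient N ≤ Nat.totient (2 * q) * j := phi_mul_le (2 * q) j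
        have h2 : Nat.totient (2 * q) = Nat.totient q := by
          rw [Nat.totient_mul (Nat.coprime_two_left.2 hodd), Nat.totient_two, one_mul]
        rw [h2] at h1
        calc 2 * q * Nat.totient N ≤ 2 * q * (Nat.totient q * j) := Nat.mul_le_mul_left _ h1
        _ = N * Nat.totient q := by rw [hN]; ring
      calc 2 * (q : ℝ) * (Nat.totient N : ℝ) = ((2 * q * Nat.totient N : ℕ) : ℝ) := by push_cast; ring
      _ ≤ ((N * Nat.totient q : ℕ) : ℝ) := by exact_mod_cast hnat
      _ = (N : ℝ) * (Nat.totient q : ℝ) := by push_cast; ring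
    -- factor 2 : d ≤ singularProd N
    have hf2 : d ≤ singularProd N := dConst_le_singularProd hNeven
    -- factor 3 : N/L ≤ N/(log N)²
    have hf3 : (N : ℝ) / L ≤ (N : ℝ) / (Real.log (N : ℝ)) ^ 2 :=
      div_le_div_of_nonneg_left hNR.le (by positivity) hsq
    have hcomb : 1 / 2 * (2 * (q : ℝ) / (Nat.totient q : ℝ)) * d * ((N : ℝ) / L) ≤
        1 / 2 * ((N : ℝ) / (Nat.totient N : ℝ)) * singularProd N *
          ((N : ℝ) / (Real.log (N : ℝ)) ^ 2) := by
      have h2q : 0 ≤ 2 * (q : ℝ) / (Nat.totient q : ℝ) := by positivity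
      have hNL : 0 ≤ (N : ℝ) / L := by positivity
      have hNphi : 0 ≤ (N : ℝ) / (Nat.totient N : ℝ) := by positivity
      have hsing : 0 ≤ singularProd N := le_trans hd0.le hf2
      nlinarith [mul_le_mul hf1 hf2 hd0.le hNphi,
        mul_le_mul (mul_le_mul hf1 hf2 hd0.le hNphi) hf3 hNL
          (mul_nonneg hNphi hsing)]
    have heq : (2 * d * (q : ℝ) ^ 2 / ((Nat.totient q : ℝ) * L)) * (j : ℝ) =
        1 / 2 * (2 * (q : ℝ) / (Nat.totient q : ℝ)) * d * ((N : ℝ) / L) := by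
      have hNR' : (N : ℝ) = 2 * (q : ℝ) * (j : ℝ) := by rw [hN]; push_cast; ring
      rw [hNR']
      field_simp
    rw [heq]
    calc 1 / 2 * (2 * (q : ℝ) / (Nat.totient q : ℝ)) * d * ((N : ℝ) / L)
        ≤ 1 / 2 * ((N : ℝ) / (Nat.totient N : ℝ)) * singularProd N *
          ((N : ℝ) / (Real.log (N : ℝ)) ^ 2) := hcomb
    _ ≤ (goldbachCount N : ℝ) := hHLN
  -- step 3 : sum the bounds
  have hsum : d * (q : ℝ) ^ 2 * (J : ℝ) * ((J : ℝ) + 1) / ((Nat.totient q : ℝ) * L) ≤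
      (T.card : ℝ) := by
    have h1 : ∑ j ∈ Finset.Icc 1 J,
        (2 * d * (q : ℝ) ^ 2 / ((Nat.totient q : ℝ) * L)) * (j : ℝ) ≤
        ∑ j ∈ Finset.Icc 1 J, (goldbachCount (2 * q * j) : ℝ) :=
      Finset.sum_le_sum hterm
    have h2 : ∑ j ∈ Finset.Icc 1 J,
        (2 * d * (q : ℝ) ^ 2 / ((Nat.totient q : ℝ) * L)) * (j : ℝ) =
        d * (q : ℝ) ^ 2 * (J : ℝ) * ((J : ℝ) + 1) / ((Nat.totient q : ℝ) * L) := by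
      rw [← Finset.mul_sum, gauss]
      field_simp
    have h3 : ∑ j ∈ Finset.Icc 1 J, (goldbachCount (2 * q * j) : ℝ) ≤ (T.card : ℝ) := by
      have := count_le q M hq0
      calc ∑ j ∈ Finset.Icc 1 J, (goldbachCount (2 * q * j) : ℝ)
          = ((∑ j ∈ Finset.Icc 1 J, goldbachCount (2 * q * j) : ℕ) : ℝ) := by push_cast; ring
      _ ≤ (T.card : ℝ) := by exact_mod_cast this
    linarith
  -- step 4 : final arithmetic
  have hJbound : (x - 1 - 2 * (q : ℝ)) / (2 * (q : ℝ)) ≤ (J : ℝ) := by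
    have h1 : M < 2 * q * (J + 1) := Nat.lt_mul_div_succ M (by omega : 0 < 2 * q)
    have h2 : (M : ℝ) < 2 * (q : ℝ) * ((J : ℝ) + 1) := by exact_mod_cast h1
    rw [div_le_iff₀ (by positivity : (0:ℝ) < 2 * (q : ℝ))]
    nlinarith
  have ht0 : 0 ≤ (x - 1 - 2 * (q : ℝ)) / (2 * (q : ℝ)) := by
    have hq2 : (9 : ℝ) ≤ (q : ℝ) ^ 2 := by nlinarith
    have hq4 : 27 * (q : ℝ) ≤ (q : ℝ) ^ 4 := by nlinarith
    have : 2 * (q : ℝ) + 1 ≤ x := by nlinarith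
    apply div_nonneg (by linarith) (by positivity)
  have hkey : (q : ℝ) * d * x ^ 2 / 4 - (2 * d + 1) * (x * (q : ℝ) ^ 2) ≤
      d * (q : ℝ) ^ 3 * (J : ℝ) * ((J : ℝ) + 1) := by
    set t := (x - 1 - 2 * (q : ℝ)) / (2 * (q : ℝ)) with htdef
    have hJt : t ≤ (J : ℝ) := hJbound
    have hJ0 : (0 : ℝ) ≤ (J : ℝ) := Nat.cast_nonneg J
    have h1 : d * (q : ℝ) ^ 3 * t * t ≤ d * (q : ℝ) ^ 3 * (J : ℝ) * ((J : ℝ) + 1) := by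
      have htt : t * t ≤ (J : ℝ) * ((J : ℝ) + 1) := by
        nlinarith [mul_le_mul hJt hJt ht0 hJ0]
      have hpos : (0:ℝ) ≤ d * (q:ℝ)^3 := by positivity
      calc d * (q : ℝ) ^ 3 * t * t = d * (q : ℝ) ^ 3 * (t * t) := by ring
      _ ≤ d * (q : ℝ) ^ 3 * ((J : ℝ) * ((J : ℝ) + 1)) := mul_le_mul_of_nonneg_left htt hpos
      _ = d * (q : ℝ) ^ 3 * (J : ℝ) * ((J : ℝ) + 1) := by ring
    have h2 : d * (q : ℝ) ^ 3 * t * t = d * (q : ℝ) * (x - 1 - 2 * (q : ℝ)) ^ 2 / 4 := by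
      rw [htdef]
      field_simp
      ring
    have hA : d * (q:ℝ) * x * (1 + 2*(q:ℝ)) / 2 ≤ (2 * d + 1) * (x * (q : ℝ) ^ 2) := by
      have e1 : 1 + 2*(q:ℝ) ≤ 3*(q:ℝ) := by linarith
      have e2 := mul_le_mul_of_nonneg_left e1 (show (0:ℝ) ≤ d*(q:ℝ)*x/2 by positivity)
      have e3 : (3/2) * d ≤ 2 * d + 1 := by linarith
      have e4 := mul_le_mul_of_nonneg_right e3 (show (0:ℝ) ≤ x*(q:ℝ)^2 by positivity)
      nlinarith [e2, e4]
    have hnn : (0:ℝ) ≤ d * (q:ℝ) * (1 + 2*(q:ℝ))^2 / 4 := by positivity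
    have h3 : (q : ℝ) * d * x ^ 2 / 4 - (2 * d + 1) * (x * (q : ℝ) ^ 2) ≤
        d * (q : ℝ) * (x - 1 - 2 * (q : ℝ)) ^ 2 / 4 := by
      nlinarith [hA, hnn]
    linarith [h2 ▸ h1]
  -- conclude
  have hq3' : d * (q : ℝ) ^ 3 * (J : ℝ) * ((J : ℝ) + 1) / ((Nat.totient q : ℝ) * L) ≤
      (T.card : ℝ) * (q : ℝ) := by
    have : d * (q : ℝ) ^ 3 * (J : ℝ) * ((J : ℝ) + 1) / ((Nat.totient q : ℝ) * L) =
        (d * (q : ℝ) ^ 2 * (J : ℝ) * ((J : ℝ) + 1) / ((Nat.totient q : ℝ) * L)) * (q : ℝ) := by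
      field_simp
    rw [this]
    apply mul_le_mul_of_nonneg_right hsum (by positivity)
  have hfinal : (q : ℝ) * d * x ^ 2 / (4 * (Nat.totient q : ℝ) * L) -
      (2 * d + 1) * (x * (q : ℝ) ^ 2) / ((Nat.totient q : ℝ) * L) ≤
      d * (q : ℝ) ^ 3 * (J : ℝ) * ((J : ℝ) + 1) / ((Nat.totient q : ℝ) * L) := by
    have hrw : (q : ℝ) * d * x ^ 2 / (4 * (Nat.totient q : ℝ) * L) -
        (2 * d + 1) * (x * (q : ℝ) ^ 2) / ((Nat.totient q : ℝ) * L) =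
        ((q : ℝ) * d * x ^ 2 / 4 - (2 * d + 1) * (x * (q : ℝ) ^ 2)) /
          ((Nat.totient q : ℝ) * L) := by
      field_simp
    rw [hrw]
    apply div_le_div_of_nonneg_right ?_ (by positivity)
    · exact hkey
  exact le_trans hfinal hq3'
end
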